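/- Suppose under H₀ a random variable N is distributed as N(0, σ²/n) and the test statistic is S(N) = c₀ + c₁·N + c₂·N² with c₂ = −n/(2(n−1)σ²) < 0, c₁ = (z*−μ)·n/((n−1)σ²), c₀ = −(1/2)log((n−1)/n) − (z*−μ)²/(2(n−1)σ²). Let m* = (z*−μ)²/σ², a = √(m*·n), and for γ ≤ γ_max := (1/2)(m* − log((n−1)/n)) let b(γ) = √((n−1)(m* − log(1−1/n) − 2γ)). Then P(S(N) ≥ γ) = Φ(a + b(γ)) − Φ(a − b(γ)), where Φ is the standard normal CDF. Moreover if γ > γ_max then P(S(N) ≥ γ) = 0. -/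

import Mathlib

open Real ProbabilityTheory
open MeasureTheory

/-- Standard normal CDF. -/
noncomputable def stdNormalCDF (x : ℝ) : ℝ :=
  ((gaussianReal 0 1) (Set.Iic x)).toReal


lemma gauss_scale (v : NNReal) (hv : v ≠ 0) :
    (gaussianReal 0 1).map (fun x => Real.sqrt v * x) = gaussianReal 0 v := by
  have h := gaussianReal_map_const_mul (μ := 0) (v := 1) (Real.sqrt v)
  have h2 : (⟨(Real.sqrt v)^2, sq_nonneg _⟩ : NNReal) * 1 = v := by
    ext
    simp [Real.sq_sqrt v.coe_nonneg]
  rw [h, mul_zero]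
  exact congrArg (gaussianReal 0) h2

lemma gauss_Iic (m : ℝ) (v : NNReal) (hv : v ≠ 0) (t : ℝ) :
    ((gaussianReal m v) (Set.Iic t)).toReal = stdNormalCDF ((t - m) / Real.sqrt v) := by
  have hsv : (0:ℝ) < Real.sqrt v := Real.sqrt_pos.mpr (by positivity)
  have h1 : (gaussianReal 0 v).map (· + m) = gaussianReal m v := by
    rw [gaussianReal_map_add_const, zero_add]
  rw [← h1, Measure.map_apply (measurable_add_const m) measurableSet_Iic]
  have hpre : (· + m) ⁻¹' Set.Iic t = Set.Iic (t - m) := by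
    ext x; simp [le_sub_iff_add_le]
  rw [hpre, ← gauss_scale v hv,
    Measure.map_apply (measurable_const_mul _) measurableSet_Iic]
  have hpre2 : (fun x => Real.sqrt v * x) ⁻¹' Set.Iic (t - m)
      = Set.Iic ((t - m) / Real.sqrt v) := by
    ext x
    simp only [Set.mem_preimage, Set.mem_Iic]
    rw [le_div_iff₀ hsv, mul_comm]
  rw [hpre2]; rfl

lemma gauss_singleton (m : ℝ) (v : NNReal) (hv : v ≠ 0) (x : ℝ) :
    gaussianReal m v {x} = 0 :=
  gaussianReal_absolutelyContinuous m hv (measure_singleton x)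

lemma gauss_Iio (m : ℝ) (v : NNReal) (hv : v ≠ 0) (x : ℝ) :
    gaussianReal m v (Set.Iio x) = gaussianReal m v (Set.Iic x) := by
  apply le_antisymm (measure_mono Set.Iio_subset_Iic_self)
  calc gaussianReal m v (Set.Iic x) ≤ gaussianReal m v (Set.Iio x ∪ {x}) := by
        apply measure_mono; intro y hy
        rcases lt_or_eq_of_le (Set.mem_Iic.mp hy) with h | h
        · exact Or.inl h
        · exact Or.inr h
    _ ≤ gaussianReal m v (Set.Iio x) + gaussianReal m v {x} := measure_union_le _ _
    _ = gaussianReal m v (Set.Iio x) := by rw [gauss_singleton m v hv, add_zero]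

lemma stdNormalCDF_neg (x : ℝ) : stdNormalCDF (-x) = 1 - stdNormalCDF x := by
  have hmap : (gaussianReal 0 1).map (fun y => (-1 : ℝ) * y) = gaussianReal 0 1 := by
    have h := gaussianReal_map_const_mul (μ := 0) (v := 1) (-1 : ℝ)
    have h2 : (⟨(-1:ℝ)^2, sq_nonneg _⟩ : NNReal) * 1 = 1 := by ext; norm_num
    rw [h, mul_zero]
    exact congrArg (gaussianReal 0) h2
  have key : gaussianReal 0 1 (Set.Iic (-x)) = gaussianReal 0 1 (Set.Ici x) := by
    conv_lhs => rw [← hmap]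
    rw [Measure.map_apply (measurable_const_mul _) measurableSet_Iic]
    congr 1
    ext y
    simp only [Set.mem_preimage, Set.mem_Iic, Set.mem_Ici]
    constructor <;> intro h <;> linarith
  have hcompl : gaussianReal 0 1 (Set.Ici x) = 1 - gaussianReal 0 1 (Set.Iio x) := by
    rw [← Set.compl_Iio, measure_compl measurableSet_Iio (measure_ne_top _ _)]
    simp
  unfold stdNormalCDF
  rw [key, hcompl, gauss_Iio 0 1 one_ne_zero]
  rw [ENNReal.toReal_sub_of_le prob_le_one (by simp)]
  simp

lemma gauss_Icc (m : ℝ) (v : NNReal) (hv : v ≠ 0) (u w : ℝ) (h : u ≤ w) :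
    ((gaussianReal m v) (Set.Icc u w)).toReal
      = ((gaussianReal m v) (Set.Iic w)).toReal - ((gaussianReal m v) (Set.Iic u)).toReal := by
  have hunion : Set.Iio u ∪ Set.Icc u w = Set.Iic w := by
    ext x
    simp only [Set.mem_union, Set.mem_Iio, Set.mem_Icc, Set.mem_Iic]
    constructor
    · rintro (h1 | ⟨h1, h2⟩) <;> linarith
    · intro hx
      rcases lt_or_ge x u with h1 | h1
      · exact Or.inl h1
      · exact Or.inr ⟨h1, hx⟩
  have hdisj : Disjoint (Set.Iio u) (Set.Icc u w) := by
    rw [Set.disjoint_left]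
    intro x hx hx2
    exact absurd hx2.1 (not_le.mpr hx)
  have key : gaussianReal m v (Set.Iio u) + gaussianReal m v (Set.Icc u w)
      = gaussianReal m v (Set.Iic w) := by
    rw [← measure_union hdisj measurableSet_Icc, hunion]
  rw [← key, gauss_Iio m v hv]
  rw [ENNReal.toReal_add (measure_ne_top _ _) (measure_ne_top _ _)]
  ring

/-- Type I error of the sequential membership inference test (Lemma 3.4). -/
theorem semi_type_one_error
    (n : ℕ) (hn : 2 ≤ n) (σ μ zstar : ℝ) (hσ : 0 < σ) (hz : zstar ≠ μ)
    (c₀ c₁ c₂ mstar a γmax : ℝ)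
    (hc₂ : c₂ = -(n : ℝ) / (2 * ((n : ℝ) - 1) * σ ^ 2))
    (hc₁ : c₁ = (zstar - μ) * n / (((n : ℝ) - 1) * σ ^ 2))
    (hc₀ : c₀ = -(1 / 2) * Real.log (((n : ℝ) - 1) / n)
        - (zstar - μ) ^ 2 / (2 * ((n : ℝ) - 1) * σ ^ 2))
    (hm : mstar = (zstar - μ) ^ 2 / σ ^ 2)
    (ha : a = Real.sqrt (mstar * n))
    (hγmax : γmax = (1 / 2) * (mstar - Real.log (((n : ℝ) - 1) / n)))
    (S : ℝ → ℝ) (hS : ∀ x, S x = c₀ + c₁ * x + c₂ * x ^ 2)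
    (b : ℝ → ℝ)
    (hb : ∀ γ, b γ = Real.sqrt (((n : ℝ) - 1) * (mstar - Real.log (1 - 1 / n) - 2 * γ)))
    (P : MeasureTheory.Measure ℝ)
    (hP : P = gaussianReal 0 ((σ ^ 2 / n).toNNReal)) :
    (∀ γ : ℝ, γ ≤ γmax →
        (P {x | γ ≤ S x}).toReal = stdNormalCDF (a + b γ) - stdNormalCDF (a - b γ))
      ∧ (∀ γ : ℝ, γmax < γ → P {x | γ ≤ S x} = 0) := by
  have hn2 : (2:ℝ) ≤ (n:ℝ) := by exact_mod_cast hn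
  have hn1pos : (0:ℝ) < (n:ℝ) - 1 := by linarith
  have hnpos : (0:ℝ) < (n:ℝ) := by linarith
  have hn0 : (n:ℝ) ≠ 0 := ne_of_gt hnpos
  have hn1 : (n:ℝ) - 1 ≠ 0 := ne_of_gt hn1pos
  have hσ0 : σ ≠ 0 := ne_of_gt hσ
  have hσ2 : (0:ℝ) < σ ^ 2 := by positivity
  set d : ℝ := zstar - μ with hd
  have hd0 : d ≠ 0 := sub_ne_zero.mpr hz
  set v : NNReal := (σ ^ 2 / (n:ℝ)).toNNReal with hv
  have hvpos : (0:ℝ) < σ ^ 2 / n := by positivity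
  have hvco : (v : ℝ) = σ ^ 2 / n := Real.coe_toNNReal _ hvpos.le
  have hv0 : v ≠ 0 := by
    intro h
    rw [h] at hvco
    simp at hvco
    linarith
  set s : ℝ := Real.sqrt v with hsdef
  have hs : (0:ℝ) < s := Real.sqrt_pos.mpr (by rw [hvco]; exact hvpos)
  have hs2 : s ^ 2 = σ ^ 2 / n := by rw [hsdef, Real.sq_sqrt v.coe_nonneg, hvco]
  have hlog : Real.log (1 - 1 / (n:ℝ)) = Real.log (((n:ℝ) - 1) / n) := by
    congr 1
    field_simp
  -- quadratic identity
  have hSd : ∀ x, S x = γmax + c₂ * (x - d) ^ 2 := by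
    intro x
    rw [hS, hc₀, hc₁, hc₂, hγmax, hm, hd]
    field_simp
    ring
  have hc₂neg : c₂ < 0 := by
    rw [hc₂]
    apply div_neg_of_neg_of_pos
    · linarith
    · positivity
  have hbnn : ∀ γ, 0 ≤ b γ := fun γ => by rw [hb]; exact Real.sqrt_nonneg _
  have hbsq : ∀ γ, γ ≤ γmax → (b γ) ^ 2 = 2 * ((n:ℝ) - 1) * (γmax - γ) := by
    intro γ hγ
    rw [hb, Real.sq_sqrt]
    · rw [hlog, hγmax]; ring
    · rw [hlog]
      have : mstar - Real.log (((n:ℝ) - 1) / n) - 2 * γ = 2 * (γmax - γ) := by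
        rw [hγmax]; ring
      rw [this]
      nlinarith
  -- cdf of P
  have hcdf : ∀ t : ℝ, (P (Set.Iic t)).toReal = stdNormalCDF (t / s) := by
    intro t
    rw [hP, gauss_Iic 0 v hv0, sub_zero]
  -- a = |d/s| facts
  have hts : (d / s) ^ 2 = mstar * n := by
    rw [div_pow, hs2, hm, hd]
    field_simp
  have habs : a = |d / s| := by
    rw [ha, ← hts, Real.sqrt_sq_eq_abs]
  constructor
  · intro γ hγ
    set r : ℝ := s * b γ with hr
    have hrnn : 0 ≤ r := mul_nonneg hs.le (hbnn γ)
    have hr2 : r ^ 2 = (σ ^ 2 / n) * (2 * ((n:ℝ) - 1) * (γmax - γ)) := by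
      rw [hr, mul_pow, hs2, hbsq γ hγ]
    have hc₂r : c₂ * r ^ 2 = γ - γmax := by
      rw [hc₂, hr2]
      field_simp
      ring
    have hset : {x | γ ≤ S x} = Set.Icc (d - r) (d + r) := by
      ext x
      simp only [Set.mem_setOf_eq, Set.mem_Icc]
      rw [hSd x]
      constructor
      · intro h
        have h1 : c₂ * r ^ 2 ≤ c₂ * (x - d) ^ 2 := by linarith
        have hsq : (x - d) ^ 2 ≤ r ^ 2 :=
          (mul_le_mul_left_of_neg hc₂neg).mp h1
        have h2 := abs_le_of_sq_le_sq' hsq hrnn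
        constructor <;> linarith [h2.1, h2.2]
      · rintro ⟨h1, h2⟩
        have hsq : (x - d) ^ 2 ≤ r ^ 2 := sq_le_sq' (by linarith) (by linarith)
        have h3 : c₂ * r ^ 2 ≤ c₂ * (x - d) ^ 2 :=
          (mul_le_mul_left_of_neg hc₂neg).mpr hsq
        linarith
    rw [hset]
    have hle : d - r ≤ d + r := by linarith
    rw [hP, gauss_Icc 0 v hv0 _ _ hle, gauss_Iic 0 v hv0, gauss_Iic 0 v hv0,
      sub_zero, sub_zero, ← hsdef]
    have e1 : (d + r) / s = d / s + b γ := by rw [hr]; field_simp; try ring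
    have e2 : (d - r) / s = d / s - b γ := by rw [hr]; field_simp; try ring
    rw [e1, e2]
    rcases abs_cases (d / s) with ⟨hcase, _⟩ | ⟨hcase, _⟩
    · rw [habs, hcase]
    · rw [habs, hcase]
      have f1 : d / s + b γ = -(-(d / s) - b γ) := by ring
      have f2 : d / s - b γ = -(-(d / s) + b γ) := by ring
      rw [f1, f2, stdNormalCDF_neg, stdNormalCDF_neg]
      ring
  · intro γ hγ
    have hset : {x | γ ≤ S x} = ∅ := by
      ext x
      simp only [Set.mem_setOf_eq, Set.mem_empty_iff_false, iff_false, not_le]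
      rw [hSd x]
      nlinarith [sq_nonneg (x - d)]
    rw [hset]
    exact measure_empty
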